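/- Let m be an even positive integer, let q = 3^{2m}, and fix δ ∈ F_q. Then the polynomial map F(x) = (x^{3^m} − x + δ)^{3^{2m−1} + 2·3^{m−1}} + x is a permutation of F_q (i.e., x ↦ F(x) is a bijection of F_q). -/

import Mathlib

theorem stmt_1 (m : ℕ) (hm : 0 < m) (hme : Even m) (F : Type*) [Field F] [Fintype F]
    (hF : Fintype.card F = 3 ^ (2 * m)) (δ : F) :
    Function.Bijective (fun x : F =>
      (x ^ (3 ^ m) - x + δ) ^ (3 ^ (2 * m - 1) + 2 * 3 ^ (m - 1)) + x) := by
  obtain ⟨k, rfl⟩ : ∃ k, m = k + 1 := ⟨m - 1, by omega⟩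
  have e1 : 2 * (k + 1) - 1 = 2 * k + 1 := by omega
  have e2 : k + 1 - 1 = k := by omega
  have e3 : 2 * (k + 1) = 2 * k + 2 := by omega
  simp only [e1, e2]
  rw [e3] at hF
  haveI : Fact (Nat.Prime 3) := ⟨by norm_num⟩
  -- characteristic 3
  haveI hchar : CharP F 3 := by
    obtain ⟨p, hp⟩ := CharP.exists F
    haveI := hp
    have hprime : p.Prime := CharP.char_is_prime F p
    haveI : Fact p.Prime := ⟨hprime⟩
    obtain ⟨n, -, hn⟩ := FiniteField.card F p
    have hp3 : p = 3 := by
      have hdvd : p ∣ 3 ^ (2 * k + 2) := by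
        rw [← hF, hn]
        exact dvd_pow_self p (by positivity)
      have h3p : p ∣ 3 := hprime.dvd_of_dvd_pow hdvd
      exact (Nat.prime_dvd_prime_iff_eq hprime (by norm_num)).mp h3p
    subst hp3; exact hp
  have h3 : (3 : F) = 0 := CharP.cast_eq_zero F 3
  have hcard : ∀ a : F, a ^ (3 : ℕ) ^ (2 * k + 2) = a := by
    intro a; rw [← hF]; exact FiniteField.pow_card a
  have pp : ∀ (a : F) (i j : ℕ), a ^ (3 : ℕ) ^ (i + j) = (a ^ (3 : ℕ) ^ i) ^ (3 : ℕ) ^ j := by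
    intro a i j; rw [pow_add, pow_mul]
  have hdouble : ∀ a : F, (a ^ (3 : ℕ) ^ (k + 1)) ^ (3 : ℕ) ^ (k + 1) = a := by
    intro a
    rw [← pp]
    have h22 : (k + 1) + (k + 1) = 2 * k + 2 := by omega
    rw [h22]; exact hcard a
  obtain ⟨c, hcdef⟩ : ∃ c : F, δ ^ (3 : ℕ) ^ (k + 1) + δ = c := ⟨_, rfl⟩
  have hcfix : c ^ (3 : ℕ) ^ (k + 1) = c := by
    rw [← hcdef, add_pow_char_pow, hdouble]; ring
  -- y-values
  have hYfix : ∀ x : F, (x ^ (3 : ℕ) ^ (k + 1) - x + δ) ^ (3 : ℕ) ^ (k + 1)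
      = c - (x ^ (3 : ℕ) ^ (k + 1) - x + δ) := by
    intro x
    rw [add_pow_char_pow, sub_pow_char_pow, hdouble, ← hcdef]; ring
  -- the key transform
  have key : ∀ y : F, y ^ (3 : ℕ) ^ (k + 1) = c - y →
      (y ^ ((3 : ℕ) ^ (2 * k + 1) + 2 * 3 ^ k)) ^ (3 : ℕ) ^ (k + 1)
        - y ^ ((3 : ℕ) ^ (2 * k + 1) + 2 * 3 ^ k)
      = (c ^ 2) ^ (3 : ℕ) ^ k * y ^ (3 : ℕ) ^ k - c + y := by
    intro y hy
    have hg1 : y ^ ((3 : ℕ) ^ (2 * k + 1) + 2 * 3 ^ k) = ((c - y) * y ^ 2) ^ (3 : ℕ) ^ k := by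
      rw [pow_add, mul_pow]
      congr 1
      · have h21 : 2 * k + 1 = (k + 1) + k := by omega
        rw [h21, pp, hy]
      · rw [← pow_mul, mul_comm]
    have hg2 : (y ^ ((3 : ℕ) ^ (2 * k + 1) + 2 * 3 ^ k)) ^ (3 : ℕ) ^ (k + 1)
        = (y * (c - y) ^ 2) ^ (3 : ℕ) ^ k := by
      rw [hg1, ← pow_mul, mul_comm ((3:ℕ) ^ k), pow_mul]
      congr 1
      rw [mul_pow, sub_pow_char_pow, hcfix, ← pow_mul, mul_comm 2, pow_mul, hy]
      ring
    rw [hg2, hg1, ← sub_pow_char_pow]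
    have hid : y * (c - y) ^ 2 - (c - y) * y ^ 2 = c ^ 2 * y - y ^ 3 := by
      linear_combination (y ^ 3 - c * y ^ 2) * h3
    rw [hid, sub_pow_char_pow, mul_pow]
    have hy3 : (y ^ 3) ^ (3 : ℕ) ^ k = y ^ (3 : ℕ) ^ (k + 1) := by
      rw [← pow_mul]; congr 1; ring
    rw [hy3, hy]
    ring
  -- injectivity suffices
  rw [Fintype.bijective_iff_injective_and_card]
  refine ⟨?_, rfl⟩
  intro x1 x2 heq
  simp only at heq
  obtain ⟨y1, hy1def⟩ : ∃ y : F, x1 ^ (3 : ℕ) ^ (k + 1) - x1 + δ = y := ⟨_, rfl⟩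
  obtain ⟨y2, hy2def⟩ : ∃ y : F, x2 ^ (3 : ℕ) ^ (k + 1) - x2 + δ = y := ⟨_, rfl⟩
  rw [hy1def, hy2def] at heq
  have hy1 : y1 ^ (3 : ℕ) ^ (k + 1) = c - y1 := by rw [← hy1def]; exact hYfix x1
  have hy2 : y2 ^ (3 : ℕ) ^ (k + 1) = c - y2 := by rw [← hy2def]; exact hYfix x2
  have k1 := key y1 hy1
  have k2 := key y2 hy2
  have ex1 : x1 ^ (3 : ℕ) ^ (k + 1) = y1 + x1 - δ := by rw [← hy1def]; ring
  have ex2 : x2 ^ (3 : ℕ) ^ (k + 1) = y2 + x2 - δ := by rw [← hy2def]; ring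
  have hE := congrArg (fun a : F => a ^ (3 : ℕ) ^ (k + 1) - a) heq
  have ha1 : (y1 ^ ((3 : ℕ) ^ (2 * k + 1) + 2 * 3 ^ k) + x1) ^ (3 : ℕ) ^ (k + 1)
      = (y1 ^ ((3 : ℕ) ^ (2 * k + 1) + 2 * 3 ^ k)) ^ (3 : ℕ) ^ (k + 1)
        + x1 ^ (3 : ℕ) ^ (k + 1) := add_pow_char_pow _ _ _ _
  have ha2 : (y2 ^ ((3 : ℕ) ^ (2 * k + 1) + 2 * 3 ^ k) + x2) ^ (3 : ℕ) ^ (k + 1)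
      = (y2 ^ ((3 : ℕ) ^ (2 * k + 1) + 2 * 3 ^ k)) ^ (3 : ℕ) ^ (k + 1)
        + x2 ^ (3 : ℕ) ^ (k + 1) := add_pow_char_pow _ _ _ _
  have E : (c ^ 2) ^ (3 : ℕ) ^ k * y1 ^ (3 : ℕ) ^ k + 2 * y1
      = (c ^ 2) ^ (3 : ℕ) ^ k * y2 ^ (3 : ℕ) ^ k + 2 * y2 := by
    linear_combination hE - ha1 + ha2 - k1 + k2 - ex1 + ex2
  by_cases hyy : y1 = y2
  · rw [hyy] at heq
    exact add_left_cancel heq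
  exfalso
  have hu0 : y1 - y2 ≠ 0 := sub_ne_zero_of_ne hyy
  have huA : (y1 - y2) ^ (3 : ℕ) ^ (k + 1) = -(y1 - y2) := by
    rw [sub_pow_char_pow, hy1, hy2]; ring
  have hu1 : (c ^ 2 * (y1 - y2)) ^ (3 : ℕ) ^ k = y1 - y2 := by
    rw [mul_pow, sub_pow_char_pow]
    linear_combination E + (y2 - y1) * h3
  have hcc : c ^ 2 * (y1 - y2) = -((y1 - y2) ^ 3) := by
    have h := congrArg (fun a : F => a ^ (3 : ℕ) ^ (k + 2)) hu1
    rw [← pow_mul, ← pow_add] at h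
    have hke : k + (k + 2) = 2 * k + 2 := by omega
    rw [hke, hcard] at h
    have hrhs : (y1 - y2) ^ (3 : ℕ) ^ (k + 2) = -((y1 - y2) ^ 3) := by
      have hk2 : k + 2 = (k + 1) + 1 := by omega
      rw [hk2, pp, huA]
      norm_num
      ring
    rw [hrhs] at h
    exact h
  have hc2 : c ^ 2 = -((y1 - y2) ^ 2) := by
    have h := mul_right_cancel₀ hu0
      (show c ^ 2 * (y1 - y2) = -((y1 - y2) ^ 2) * (y1 - y2) by linear_combination hcc)
    exact h
  obtain ⟨v, hvdef⟩ : ∃ v : F, c * (y1 - y2)⁻¹ = v := ⟨_, rfl⟩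
  have hv2 : v ^ 2 = -1 := by
    rw [← hvdef, mul_pow, inv_pow, hc2, neg_mul,
      mul_inv_cancel₀ (pow_ne_zero 2 hu0)]
  have hvA : v ^ (3 : ℕ) ^ (k + 1) = -v := by
    rw [← hvdef, mul_pow, inv_pow, huA, hcfix, inv_neg, mul_neg]
  obtain ⟨j, hj⟩ := hme
  obtain ⟨t, ht⟩ : ∃ t, (3 : ℕ) ^ (k + 1) = 4 * t + 1 := by
    have H : ∀ j : ℕ, ∃ t, (9 : ℕ) ^ j = 4 * t + 1 := by
      intro j
      induction j with
      | zero => exact ⟨0, rfl⟩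
      | succ n ih =>
        obtain ⟨t, ht⟩ := ih
        exact ⟨9 * t + 2, by rw [pow_succ, ht]; ring⟩
    obtain ⟨t, ht⟩ := H j
    refine ⟨t, ?_⟩
    rw [hj, ← two_mul, pow_mul]
    norm_num
    omega
  have hvv : v ^ (3 : ℕ) ^ (k + 1) = v := by
    rw [ht, pow_succ, pow_mul]
    have hv4 : v ^ 4 = 1 := by
      have h4 : v ^ 4 = (v ^ 2) ^ 2 := by ring
      rw [h4, hv2]; norm_num
    rw [hv4, one_pow, one_mul]
  have hveq : -v = v := hvA.symm.trans hvv
  have hv0 : v = 0 := by linear_combination hveq + v * h3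
  rw [hv0] at hv2
  norm_num at hv2
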